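/- Let X be a normed space, let L > 0, and let {(x_i, f_i)}_{i∈I} be a family of pairs in X × X* which is biorthogonal, i.e., f_i(x_i) = 1 and f_i(x_j) = 0 for all distinct i, j ∈ I, and satisfies ‖f_i‖ ≤ L for all i ∈ I. For a nonempty subset A ⊆ I let C_A = cconv{x_i : i ∈ A} be the closed convex hull of {x_i : i ∈ A}. Then for any two distinct nonempty subsets A, B ⊆ I one has d_H(C_A, C_B) ≥ 1/L. -/

import Mathlib

private lemma aux_infEdist_ge
    {X : Type*} [NormedAddCommGroup X] [NormedSpace ℝ X] {I : Type*}
    (L : ℝ) (hL : 0 < L) (x : I → X) (f : I → (X →L[ℝ] ℝ))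
    (hdiag : ∀ i, f i (x i) = 1)
    (hoff : ∀ i j, i ≠ j → f i (x j) = 0)
    (hnorm : ∀ i, ‖f i‖ ≤ L)
    (B : Set I) {i : I} (hiB : i ∉ B) :
    ENNReal.ofReal (1 / L) ≤
      EMetric.infEdist (x i) (closure (convexHull ℝ (x '' B))) := by
  have hzero : closure (convexHull ℝ (x '' B)) ⊆ (f i) ⁻¹' {0} := by
    have hclosed : IsClosed ((f i) ⁻¹' ({0} : Set ℝ)) :=
      isClosed_singleton.preimage (f i).continuous
    apply hclosed.closure_subset_iff.2
    apply convexHull_min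
    · rintro _ ⟨j, hj, rfl⟩
      have : i ≠ j := fun h => hiB (h ▸ hj)
      simp [hoff i j this]
    · exact (convex_singleton (0 : ℝ)).linear_preimage (f i).toLinearMap
  refine EMetric.le_infEdist.2 fun b hb => ?_
  rw [edist_dist]
  refine ENNReal.ofReal_le_ofReal ?_
  rw [div_le_iff₀ hL] at *
  have h1 : (1 : ℝ) = f i (x i) - f i b := by
    have hb0 : f i b = 0 := hzero hb
    rw [hb0, hdiag i]; ring
  calc (1 : ℝ) = |f i (x i) - f i b| := by rw [← h1]; simp
    _ = ‖f i (x i - b)‖ := by rw [map_sub]; rfl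
    _ ≤ ‖f i‖ * ‖x i - b‖ := (f i).le_opNorm _
    _ ≤ L * ‖x i - b‖ := by
        apply mul_le_mul_of_nonneg_right (hnorm i) (norm_nonneg _)
    _ = dist (x i) b * L := by rw [dist_eq_norm]; ring


/-- Let `{(x_i, f_i)}_{i ∈ I}` be a biorthogonal family in `X × X*` with `‖f_i‖ ≤ L`.
Then the closed convex hulls `C_A = cconv {x_i : i ∈ A}` of distinct nonempty index sets
`A, B ⊆ I` satisfy `d_H(C_A, C_B) ≥ 1/L`. -/
theorem hausdorffEdist_ge_of_biorthogonal
    {X : Type*} [NormedAddCommGroup X] [NormedSpace ℝ X] {I : Type*}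
    (L : ℝ) (hL : 0 < L) (x : I → X) (f : I → (X →L[ℝ] ℝ))
    (hdiag : ∀ i, f i (x i) = 1)
    (hoff : ∀ i j, i ≠ j → f i (x j) = 0)
    (hnorm : ∀ i, ‖f i‖ ≤ L)
    (A B : Set I) (hA : A.Nonempty) (hB : B.Nonempty) (hAB : A ≠ B) :
    ENNReal.ofReal (1 / L) ≤
      EMetric.hausdorffEdist (closure (convexHull ℝ (x '' A)))
        (closure (convexHull ℝ (x '' B))) := by
  have key : ∀ (S T : Set I), ∀ i ∈ S, i ∉ T →
      ENNReal.ofReal (1 / L) ≤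
        EMetric.hausdorffEdist (closure (convexHull ℝ (x '' S)))
          (closure (convexHull ℝ (x '' T))) := by
    intro S T i hiS hiT
    have hmem : x i ∈ closure (convexHull ℝ (x '' S)) :=
      subset_closure (subset_convexHull ℝ _ ⟨i, hiS, rfl⟩)
    exact le_trans (aux_infEdist_ge L hL x f hdiag hoff hnorm T hiT)
      (EMetric.infEdist_le_hausdorffEdist_of_mem hmem)
  have : ¬ A ⊆ B ∨ ¬ B ⊆ A := by
    by_contra h
    push_neg at h
    exact hAB (Set.Subset.antisymm h.1 h.2)
  rcases this with h | h
  · obtain ⟨i, hiA, hiB⟩ := Set.not_subset.1 h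
    exact key A B i hiA hiB
  · obtain ⟨i, hiB, hiA⟩ := Set.not_subset.1 h
    rw [show EMetric.hausdorffEdist (closure (convexHull ℝ (x '' A))) (closure (convexHull ℝ (x '' B))) = EMetric.hausdorffEdist (closure (convexHull ℝ (x '' B))) (closure (convexHull ℝ (x '' A))) from EMetric.hausdorffEdist_comm]
    exact key B A i hiB hiA
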